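/- The set D̂₁⁺ = [k, û₁] × [ŵ₁, v̂] is an absorbing set for the Chialvo map f: for every point (x,y) ∈ ℝ² there exists N₀ ≥ 0 such that for all n ≥ N₀ the n-th iterate fⁿ(x,y) lies in D̂₁⁺. -/
import Mathlib

set_option maxHeartbeats 1000000


/-- The set `D̂₁⁺ = [k, û₁] × [ŵ₁, v̂]` is an absorbing set for the Chialvo map:
every forward trajectory eventually enters it and stays there forever. -/
theorem chialvo_D1plus_absorbing
    (a b c k : ℝ)
    (ha : a ∈ Set.Ioo (0:ℝ) 1) (hb : b ∈ Set.Ioo (0:ℝ) 1)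
    (hc : c ∈ Set.Ioo (0:ℝ) 1) (hk : 0 < k)
    (f : ℝ × ℝ → ℝ × ℝ)
    (hf : ∀ p : ℝ × ℝ,
      f p = (p.1 ^ 2 * Real.exp (p.2 - p.1) + k, a * p.2 - b * p.1 + c))
    (v u1 w1 : ℝ)
    (hv : v = (c - b * k) / (1 - a))
    (hu1 : u1 = 4 / Real.exp 2 * Real.exp v + k)
    (hw1 : w1 = (c - b * u1) / (1 - a)) :
    ∀ p : ℝ × ℝ, ∃ N₀ : ℕ, ∀ n ≥ N₀,
      f^[n] p ∈ Set.Icc k u1 ×ˢ Set.Icc w1 v := by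
  obtain ⟨ha0, ha1⟩ := ha
  obtain ⟨hb0, hb1⟩ := hb
  obtain ⟨hc0, hc1⟩ := hc
  have ha' : (0:ℝ) < 1 - a := by linarith
  have hv1 : (1 - a) * v = c - b * k := by rw [hv]; field_simp
  have hw1' : (1 - a) * w1 = c - b * u1 := by rw [hw1]; field_simp
  have hv2 : a * v - b * k + c = v := by linear_combination -hv1
  have hw2 : a * w1 - b * u1 + c = w1 := by linear_combination -hw1'
  have he2 : (0:ℝ) < Real.exp 2 := Real.exp_pos 2
  -- key inequality : for z ≥ 0, z² e^(w−z) ≤ (4/e²) e^w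
  have hexp : ∀ z w : ℝ, 0 ≤ z → z^2 * Real.exp (w - z) ≤ 4 / Real.exp 2 * Real.exp w := by
    intro z w hz
    have h1 : z/2 ≤ Real.exp (z/2 - 1) := by
      have := Real.add_one_le_exp (z/2 - 1); linarith
    have h4 : Real.exp (z/2-1) * Real.exp (z/2-1) = Real.exp (z-2) := by
      rw [← Real.exp_add]; ring_nf
    have h2 : z^2/4 ≤ Real.exp (z - 2) := by
      have h3 : (z/2) * (z/2) ≤ Real.exp (z/2-1) * Real.exp (z/2-1) :=
        mul_le_mul h1 h1 (by linarith) (le_trans (by linarith) h1)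
      nlinarith
    have h5 : z^2 * Real.exp (w - z) ≤ 4 * Real.exp (z-2) * Real.exp (w - z) := by
      nlinarith [Real.exp_pos (w-z)]
    have h6 : 4 * Real.exp (z-2) * Real.exp (w - z) = 4 / Real.exp 2 * Real.exp w := by
      rw [mul_assoc, ← Real.exp_add, show z - 2 + (w - z) = w - 2 by ring, Real.exp_sub]
      ring
    linarith [h6.le, h6.ge]
  have hu1k : k < u1 := by
    rw [hu1]
    have : (0:ℝ) < 4 / Real.exp 2 * Real.exp v := by positivity
    linarith
  have hwv : w1 < v := by
    have h : (1-a)*w1 < (1-a)*v := by rw [hv1, hw1']; nlinarith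
    exact lt_of_mul_lt_mul_left h ha'.le
  intro p
  set q : ℕ → ℝ × ℝ := fun n => f^[n] p with hq
  have hxr : ∀ n, (q (n+1)).1 = (q n).1^2 * Real.exp ((q n).2 - (q n).1) + k := by
    intro n
    have : q (n+1) = f (q n) := Function.iterate_succ_apply' f n p
    rw [this, hf]
  have hyr : ∀ n, (q (n+1)).2 = a*(q n).2 - b*(q n).1 + c := by
    intro n
    have : q (n+1) = f (q n) := Function.iterate_succ_apply' f n p
    rw [this, hf]
  have hxk : ∀ n, k ≤ (q (n+1)).1 := by
    intro n; rw [hxr n]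
    nlinarith [mul_nonneg (sq_nonneg (q n).1) (Real.exp_pos ((q n).2 - (q n).1)).le]
  have hxk' : ∀ n, 1 ≤ n → k ≤ (q n).1 := by
    intro n hn
    cases n with
    | zero => omega
    | succ m => exact hxk m
  -- crude upper bound for y then x
  set B : ℝ := max ((q 1).2) v with hB
  have hyB : ∀ n, 1 ≤ n → (q n).2 ≤ B := by
    intro n hn
    induction n, hn using Nat.le_induction with
    | base => exact le_max_left _ _
    | succ n hn ih =>
      rw [hyr n]
      have h1 := hxk' n hn
      have h2 : v ≤ B := le_max_right _ _
      nlinarith [mul_le_mul_of_nonneg_left ih ha0.le, mul_le_mul_of_nonneg_left h1 hb0.le]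
  set M : ℝ := 4 / Real.exp 2 * Real.exp B + k with hM
  have hxM : ∀ n, 2 ≤ n → (q n).1 ≤ M := by
    intro n hn
    obtain ⟨m, rfl⟩ : ∃ m, n = m + 2 := ⟨n - 2, by omega⟩
    rw [show m + 2 = (m+1) + 1 from rfl, hxr (m+1)]
    have h1 := hexp ((q (m+1)).1) ((q (m+1)).2) (le_trans hk.le (hxk m))
    have h2 : Real.exp ((q (m+1)).2) ≤ Real.exp B :=
      Real.exp_le_exp.mpr (hyB (m+1) (by omega))
    have h3 : (0:ℝ) ≤ 4 / Real.exp 2 := by positivity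
    rw [hM]
    linarith [mul_le_mul_of_nonneg_left h2 h3]
  set δ : ℝ := k^2 * Real.exp (v - M) with hδ
  have hδ0 : 0 < δ := by positivity
  have hxδ : ∀ n, 2 ≤ n → v ≤ (q n).2 → k + δ ≤ (q (n+1)).1 := by
    intro n hn hyn
    rw [hxr n]
    have h1 : k ≤ (q n).1 := hxk' n (by omega)
    have h2 : (q n).1 ≤ M := hxM n hn
    have h3 : Real.exp (v - M) ≤ Real.exp ((q n).2 - (q n).1) :=
      Real.exp_le_exp.mpr (by linarith)
    have h4 : k^2 ≤ (q n).1^2 := by nlinarith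
    have h5 : k^2 * Real.exp (v - M) ≤ (q n).1^2 * Real.exp ((q n).2 - (q n).1) :=
      mul_le_mul h4 h3 (Real.exp_pos _).le (sq_nonneg _)
    rw [hδ]
    linarith
  -- Stage 1 : y eventually drops below v
  have hstage1 : ∃ N, 3 ≤ N ∧ (q N).2 ≤ v := by
    by_contra hcon
    push_neg at hcon
    have hx4 : ∀ n, 3 ≤ n → k + δ ≤ (q (n+1)).1 := fun n hn =>
      hxδ n (by omega) (hcon n hn).le
    have hdesc : ∀ m : ℕ, (q (m+4)).2 ≤ (q 4).2 - m * (b*δ) := by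
      intro m
      induction m with
      | zero => simp
      | succ i ih =>
        have h1 : k + δ ≤ (q (i+4)).1 := by
          have := hx4 (i+3) (by omega)
          rwa [show i+3+1 = i+4 from rfl] at this
        have h2 : v < (q (i+4)).2 := hcon (i+4) (by omega)
        have h3 : (q (i+4+1)).2 ≤ (q (i+4)).2 - b*δ := by
          rw [hyr (i+4)]
          nlinarith [mul_le_mul_of_nonneg_left h1 hb0.le,
            mul_pos ha' (sub_pos.mpr h2)]
        rw [show i+1+4 = i+4+1 by omega]
        push_cast
        linarith
    obtain ⟨m, hm⟩ := exists_nat_gt (((q 4).2 - v) / (b*δ))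
    have hbδ : 0 < b*δ := by positivity
    rw [div_lt_iff₀ hbδ] at hm
    have h5 := hdesc m
    have h6 := hcon (m+4) (by omega)
    linarith
  obtain ⟨N, hN3, hNv⟩ := hstage1
  -- y ≤ v is invariant from N on
  have hYv : ∀ n, N ≤ n → (q n).2 ≤ v := by
    intro n hn
    induction n, hn using Nat.le_induction with
    | base => exact hNv
    | succ n hn ih =>
      rw [hyr n]
      have h1 : k ≤ (q n).1 := hxk' n (by omega)
      linarith [mul_le_mul_of_nonneg_left ih ha0.le,
        mul_le_mul_of_nonneg_left h1 hb0.le, hv2]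
  -- x ∈ [k, u1] from N+1 on
  have hXu : ∀ n, N+1 ≤ n → k ≤ (q n).1 ∧ (q n).1 ≤ u1 := by
    intro n hn
    obtain ⟨m, rfl⟩ : ∃ m, n = m + 1 := ⟨n - 1, by omega⟩
    refine ⟨hxk m, ?_⟩
    rw [hxr m]
    have h1 := hexp ((q m).1) ((q m).2) (le_trans hk.le (hxk' m (by omega)))
    have h2 : Real.exp ((q m).2) ≤ Real.exp v :=
      Real.exp_le_exp.mpr (hYv m (by omega))
    have h3 : (0:ℝ) ≤ 4 / Real.exp 2 := by positivity
    rw [hu1]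
    linarith [mul_le_mul_of_nonneg_left h2 h3]
  set ε : ℝ := 4 / Real.exp 2 * (Real.exp v - Real.exp w1) with hε
  have hε0 : 0 < ε := by
    rw [hε]
    have h2 := Real.exp_lt_exp.mpr hwv
    have h3 : (0:ℝ) < 4 / Real.exp 2 := by positivity
    exact mul_pos h3 (by linarith)
  have hstuck : ∀ n, N+1 ≤ n → (q n).2 ≤ w1 → (q (n+1)).1 ≤ u1 - ε := by
    intro n hn hyn
    rw [hxr n]
    have h1 := hexp ((q n).1) ((q n).2) (le_trans hk.le (hxk' n (by omega)))
    have h2 : Real.exp ((q n).2) ≤ Real.exp w1 := Real.exp_le_exp.mpr hyn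
    have h3 : (0:ℝ) ≤ 4 / Real.exp 2 := by positivity
    rw [hu1, hε]
    have h4 : 4/Real.exp 2 * Real.exp v + k - 4/Real.exp 2*(Real.exp v - Real.exp w1)
        = 4/Real.exp 2 * Real.exp w1 + k := by ring
    linarith [mul_le_mul_of_nonneg_left h2 h3]
  -- Stage 2 : y eventually rises above w1
  have hstage2 : ∃ m, N+1 ≤ m ∧ w1 ≤ (q m).2 := by
    by_contra hcon
    push_neg at hcon
    have hx' : ∀ n, N+2 ≤ n → (q n).1 ≤ u1 - ε := by
      intro n hn
      obtain ⟨m, rfl⟩ : ∃ m, n = m + 1 := ⟨n - 1, by omega⟩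
      exact hstuck m (by omega) (hcon m (by omega)).le
    have hasc : ∀ m : ℕ, (q (N+2)).2 + m*(b*ε) ≤ (q (N+2+m)).2 := by
      intro m
      induction m with
      | zero => simp
      | succ i ih =>
        have h1 : (q (N+2+i)).1 ≤ u1 - ε := hx' (N+2+i) (by omega)
        have h2 : (q (N+2+i)).2 < w1 := hcon (N+2+i) (by omega)
        have h3 : (q (N+2+i)).2 + b*ε ≤ (q (N+2+i+1)).2 := by
          rw [hyr (N+2+i)]
          nlinarith [mul_le_mul_of_nonneg_left h1 hb0.le,
            mul_pos ha' (sub_pos.mpr h2)]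
        rw [show N+2+(i+1) = N+2+i+1 by omega]
        push_cast
        linarith
    obtain ⟨m, hm⟩ := exists_nat_gt ((w1 - (q (N+2)).2) / (b*ε))
    have hbε : 0 < b*ε := by positivity
    rw [div_lt_iff₀ hbε] at hm
    have h5 := hasc m
    have h6 := hcon (N+2+m) (by omega)
    linarith
  obtain ⟨N₀, hN₀, hN₀w⟩ := hstage2
  refine ⟨N₀, ?_⟩
  -- the box is invariant from N₀ on
  have hbox : ∀ n, N₀ ≤ n → (k ≤ (q n).1 ∧ (q n).1 ≤ u1) ∧ (w1 ≤ (q n).2 ∧ (q n).2 ≤ v) := by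
    intro n hn
    induction n, hn using Nat.le_induction with
    | base => exact ⟨hXu N₀ hN₀, hN₀w, hYv N₀ (by omega)⟩
    | succ n hn ih =>
      obtain ⟨⟨hx1, hx2⟩, hy1, hy2⟩ := ih
      refine ⟨⟨hxk n, ?_⟩, ?_, ?_⟩
      · rw [hxr n]
        have h1 := hexp ((q n).1) ((q n).2) (le_trans hk.le hx1)
        have h2 : Real.exp ((q n).2) ≤ Real.exp v := Real.exp_le_exp.mpr hy2
        have h3 : (0:ℝ) ≤ 4 / Real.exp 2 := by positivity
        rw [hu1]
        linarith [mul_le_mul_of_nonneg_left h2 h3]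
      · rw [hyr n]
        linarith [mul_le_mul_of_nonneg_left hy1 ha0.le,
          mul_le_mul_of_nonneg_left hx2 hb0.le, hw2]
      · rw [hyr n]
        linarith [mul_le_mul_of_nonneg_left hy2 ha0.le,
          mul_le_mul_of_nonneg_left hx1 hb0.le, hv2]
  intro n hn
  obtain ⟨⟨hx1, hx2⟩, hy1, hy2⟩ := hbox n hn
  exact Set.mem_prod.mpr ⟨Set.mem_Icc.mpr ⟨hx1, hx2⟩, Set.mem_Icc.mpr ⟨hy1, hy2⟩⟩
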